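/- In the forest fire model (disjunctive scenario), where FF = L ∨ MD with context L_exo = MD_exo = 1, neither L = 1 alone nor MD = 1 alone satisfies AC2: for every set W⃗ of endogenous variables fixed at actual values, flipping only L (resp. only MD) still yields FF = 1; but the conjunction L = 1 ∧ MD = 1 is an actual cause of FF = 1. -/
import Mathlib


/-- A Boolean causal model: each endogenous variable `v : V` has a structural
equation `F v` computing its value from the exogenous assignment and the
values of the other endogenous variables. -/
structure CausalModel (U V : Type) where
  F : V → (U → Bool) → (V → Bool) → Bool

/-- `a` is a solution of the model `M` under context `u` and intervention `I`
(`I v = some b` means `v` has been set to the constant `b`). -/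
def Solves {U V : Type} (M : CausalModel U V) (u : U → Bool) (I : V → Option Bool)
    (a : V → Bool) : Prop :=
  ∀ v, a v = (I v).getD (M.F v u a)

/-- The intervention `[X⃗ ← x⃗', W⃗ ← w⃗]`. -/
def ivn {V : Type} [DecidableEq V] (Xs : Finset V) (x' : V → Bool) (W : Finset V)
    (w : V → Bool) : V → Option Bool :=
  fun v => if v ∈ Xs then some (x' v) else if v ∈ W then some (w v) else none

/-- AC1: the cause and the effect hold in the actual evaluation `act`. -/
def AC1 {U V : Type} (_M : CausalModel U V) (_u : U → Bool) (act : V → Bool)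
    (Xs : Finset V) (x : V → Bool) (φ : (V → Bool) → Prop) : Prop :=
  (∀ v ∈ Xs, act v = x v) ∧ φ act

/-- AC2: some contingency `W⃗` (fixed at its actual values) and some setting `x⃗'`
of the cause variables make `¬φ` hold. -/
def AC2 {U V : Type} [DecidableEq V] (M : CausalModel U V) (u : U → Bool) (act : V → Bool)
    (Xs : Finset V) (φ : (V → Bool) → Prop) : Prop :=
  ∃ (W : Finset V) (x' a : V → Bool), Solves M u (ivn Xs x' W act) a ∧ ¬ φ a

/-- AC3: minimality — no strict subset of the cause satisfies AC1 and AC2. -/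
def AC3 {U V : Type} [DecidableEq V] (M : CausalModel U V) (u : U → Bool) (act : V → Bool)
    (Xs : Finset V) (x : V → Bool) (φ : (V → Bool) → Prop) : Prop :=
  ∀ Xs' : Finset V, Xs' ⊂ Xs → ¬ (AC1 M u act Xs' x φ ∧ AC2 M u act Xs' φ)

/-- Modified Halpern–Pearl actual cause. -/
def IsCause {U V : Type} [DecidableEq V] (M : CausalModel U V) (u : U → Bool) (act : V → Bool)
    (Xs : Finset V) (x : V → Bool) (φ : (V → Bool) → Prop) : Prop :=
  AC1 M u act Xs x φ ∧ AC2 M u act Xs φ ∧ AC3 M u act Xs x φ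

/-- Forest fire endogenous variables. -/
inductive FV | L | MD | FF
deriving DecidableEq

/-- Forest fire exogenous variables. -/
inductive FU | Le | MDe
deriving DecidableEq

/-- The disjunctive forest fire model: FF = L ∨ MD. -/
def FM : CausalModel FU FV where
  F v u a :=
    match v with
    | .L => u .Le
    | .MD => u .MDe
    | .FF => a .L || a .MD

/-- Context: lightning and match drop both occur. -/
def fu : FU → Bool := fun _ => true

/-- Actual evaluation: everything is 1. -/
def fact : FV → Bool := fun _ => true

lemma ffTrue (Xs W : Finset FV) (x' a : FV → Bool)
    (hMD : FV.MD ∉ Xs ∨ FV.L ∉ Xs) (hFF : FV.FF ∉ Xs)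
    (hs : Solves FM fu (ivn Xs x' W fact) a) : a FV.FF = true := by
  have key : a FV.MD = true ∨ a FV.L = true := by
    rcases hMD with h | h
    · left
      have := hs FV.MD
      simp only [ivn, h, if_false] at this
      split at this <;> simp_all [fact, FM, fu]
    · right
      have := hs FV.L
      simp only [ivn, h, if_false] at this
      split at this <;> simp_all [fact, FM, fu]
  have := hs FV.FF
  simp only [ivn, hFF, if_false] at this
  rcases key with h | h <;> split at this <;> simp_all [fact, FM, fu]

/-- In the disjunctive forest fire scenario, neither `L = 1` nor `MD = 1`
alone satisfies AC2 — flipping only one of them under any contingency fixed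
at actual values leaves `FF = 1` — but `L = 1 ∧ MD = 1` is an actual cause
of `FF = 1`. -/
theorem stmt13 :
    (∀ (W : Finset FV) (a : FV → Bool),
      Solves FM fu (ivn {FV.L} (fun _ => false) W fact) a → a FV.FF = true) ∧
    (∀ (W : Finset FV) (a : FV → Bool),
      Solves FM fu (ivn {FV.MD} (fun _ => false) W fact) a → a FV.FF = true) ∧
    ¬ AC2 FM fu fact {FV.L} (fun a => a FV.FF = true) ∧
    ¬ AC2 FM fu fact {FV.MD} (fun a => a FV.FF = true) ∧
    IsCause FM fu fact {FV.L, FV.MD} (fun _ => true) (fun a => a FV.FF = true) := by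
  have hL : ∀ (W : Finset FV) (x' a : FV → Bool),
      Solves FM fu (ivn {FV.L} x' W fact) a → a FV.FF = true := by
    intro W x' a hs
    exact ffTrue _ W x' a (Or.inl (by decide)) (by decide) hs
  have hMD : ∀ (W : Finset FV) (x' a : FV → Bool),
      Solves FM fu (ivn {FV.MD} x' W fact) a → a FV.FF = true := by
    intro W x' a hs
    exact ffTrue _ W x' a (Or.inr (by decide)) (by decide) hs
  refine ⟨fun W a => hL W _ a, fun W a => hMD W _ a, ?_, ?_, ?_⟩
  · rintro ⟨W, x', a, hs, hφ⟩; exact hφ (hL W x' a hs)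
  · rintro ⟨W, x', a, hs, hφ⟩; exact hφ (hMD W x' a hs)
  refine ⟨⟨fun v _ => rfl, rfl⟩, ?_, ?_⟩
  · refine ⟨∅, fun _ => false, fun _ => false, ?_, by simp⟩
    intro v; cases v <;> simp [ivn, FM]
  · intro Xs' hsub ⟨_, hAC2⟩
    rcases hAC2 with ⟨W, x', a, hs, hφ⟩
    have hFF : FV.FF ∉ Xs' := fun h => by
      have := hsub.subset h; simp at this
    have : FV.MD ∉ Xs' ∨ FV.L ∉ Xs' := by
      by_contra h
      push_neg at h
      have : ({FV.L, FV.MD} : Finset FV) ⊆ Xs' := by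
        intro v hv; simp at hv; rcases hv with rfl | rfl
        exacts [h.2, h.1]
      exact absurd (Finset.Subset.antisymm hsub.subset this) hsub.ne
    exact hφ (ffTrue Xs' W x' a this hFF hs)
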